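/- Assume p and q are odd. Then the number of tuples (z, b, a), where z is a ρ-vector, b_1 ≥ b_2 ≥ … ≥ b_{q−1} ≥ 0 and a_1 ≥ a_2 ≥ … ≥ a_p ≥ 0 are integers, satisfying z_i − 2b_i = q − i for all 1 ≤ i ≤ q−1 and z_{q−1+j} + 2a_{p+1−j} = −j for all 1 ≤ j ≤ p, equals the binomial coefficient C(k−1, (p−1)/2) = C(k−1, (q−1)/2). -/

import Mathlib

open Finset

/-- A solution for the Dirac cohomology multiplicity count of `X'(p,q;1,0)` for
`Sp(2n,ℝ)`, `n = 2k−1 = p+q−1`: a ρ-vector `z` (strictly decreasing with absolute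
values exactly `{1, …, n}`), weakly decreasing nonnegative integers
`b_1 ≥ … ≥ b_{q−1} ≥ 0`, `a_1 ≥ … ≥ a_p ≥ 0` with `z_i − 2b_i = q − i` for
`1 ≤ i ≤ q−1` and `z_{q−1+j} + 2a_{p+1−j} = −j` for `1 ≤ j ≤ p`
(written here with 0-based indices). -/
structure RhoSol (n p q : ℕ) (hn : q - 1 + p = n) where
  z : Fin n → ℤ
  b : Fin (q - 1) → ℤ
  a : Fin p → ℤ
  z_anti : StrictAnti z
  z_abs : Finset.univ.image (fun i => |z i|) = Finset.Icc (1 : ℤ) (n : ℤ)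
  b_anti : Antitone b
  a_anti : Antitone a
  b_nonneg : ∀ i, 0 ≤ b i
  a_nonneg : ∀ m, 0 ≤ a m
  hzb : ∀ i : Fin (q - 1),
    z ⟨i.1, by have := i.isLt; omega⟩ - 2 * b i = (q : ℤ) - 1 - i.1
  hza : ∀ j : Fin p,
    z ⟨q - 1 + j.1, by have := j.isLt; omega⟩ +
      2 * a ⟨p - 1 - j.1, by have := j.isLt; omega⟩ = -(j.1 : ℤ) - 1


/-- An integer-valued strictly monotone map on `Fin m` grows at least linearly. -/
lemma strictMono_int_gap {m : ℕ} {g : Fin m → ℤ} (hg : StrictMono g) :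
    ∀ i j : Fin m, i ≤ j → (j.1 : ℤ) - i.1 ≤ g j - g i := by
  intro i j hij
  obtain ⟨d, hd⟩ : ∃ d, j.1 = i.1 + d := ⟨j.1 - i.1, by omega⟩
  induction d generalizing j with
  | zero => have : i = j := Fin.ext (by omega); subst this; simp
  | succ e ih =>
    have hlt : i.1 + e < m := by have := j.2; omega
    have h1 := ih ⟨i.1 + e, hlt⟩ (Fin.le_def.2 (by simp)) rfl
    have h2 : g ⟨i.1 + e, hlt⟩ < g j := hg (Fin.lt_def.2 (by simp [hd]))
    simp only [Fin.val_mk] at h1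
    have hj : (j.1 : ℤ) = i.1 + (e + 1) := by exact_mod_cast congrArg Nat.cast hd
    push_cast at hj ⊢
    omega

/-- The `j`-th element of a finset of integers that is `⊆ Icc 1 M` is at least `j+1`. -/
lemma orderEmb_lower {M : ℤ} {A : Finset ℤ} (hA : A ⊆ Finset.Icc 1 M) {m : ℕ}
    (h : A.card = m) (j : Fin m) : (j.1 : ℤ) + 1 ≤ A.orderEmbOfFin h j := by
  have hm : 0 < m := by have := j.2; omega
  have h0 : (1 : ℤ) ≤ A.orderEmbOfFin h ⟨0, hm⟩ := by
    have := hA (A.orderEmbOfFin_mem h ⟨0, hm⟩)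
    exact (Finset.mem_Icc.1 this).1
  have := strictMono_int_gap (A.orderEmbOfFin h).strictMono ⟨0, hm⟩ j
    (Fin.le_def.2 (by simp))
  simp only [Fin.val_mk, Nat.cast_zero, sub_zero] at this
  omega


def pairClosed (k : ℕ) (A : Finset ℤ) : Prop :=
  ∀ i : ℕ, i + 1 < k → ((2*(i:ℤ)+1 ∈ A) ↔ (2*(i:ℤ)+2 ∈ A))

lemma evenBelow {k : ℕ} {A : Finset ℤ} (hA : A ⊆ Finset.Icc 1 (2*(k:ℤ)-1))
    (hp : pairClosed k A) : ∀ i : ℕ, i < k → Even (A.filter (fun x => x ≤ 2*(i:ℤ))).card := by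
  intro i
  induction i with
  | zero =>
    intro _
    have : A.filter (fun x => x ≤ 2*((0:ℕ):ℤ)) = ∅ := by
      rw [Finset.filter_eq_empty_iff]
      intro x hx
      have := Finset.mem_Icc.1 (hA hx)
      push_cast
      omega
    push_cast at this ⊢
    simp [this]
  | succ e ih =>
    intro hek
    have hsplit : A.filter (fun x => x ≤ 2*((e+1:ℕ):ℤ)) =
        A.filter (fun x => x ≤ 2*(e:ℤ)) ∪ A.filter (fun x => x = 2*(e:ℤ)+1 ∨ x = 2*(e:ℤ)+2) := by
      ext x
      simp only [Finset.mem_filter, Finset.mem_union]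
      push_cast
      constructor
      · rintro ⟨hx, hle⟩
        by_cases h1 : x ≤ 2*(e:ℤ)
        · exact Or.inl ⟨hx, h1⟩
        · exact Or.inr ⟨hx, by omega⟩
      · rintro (⟨hx, h1⟩ | ⟨hx, h1⟩) <;> exact ⟨hx, by omega⟩
    have hdisj : Disjoint (A.filter (fun x => x ≤ 2*(e:ℤ)))
        (A.filter (fun x => x = 2*(e:ℤ)+1 ∨ x = 2*(e:ℤ)+2)) := by
      rw [Finset.disjoint_filter]
      rintro x _ hle (h | h) <;> omega
    rw [hsplit, Finset.card_union_of_disjoint hdisj]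
    have hpair : Even (A.filter (fun x => x = 2*(e:ℤ)+1 ∨ x = 2*(e:ℤ)+2)).card := by
      by_cases hmem : (2*(e:ℤ)+1) ∈ A
      · have hmem2 : (2*(e:ℤ)+2) ∈ A := (hp e hek).1 hmem
        have : A.filter (fun x => x = 2*(e:ℤ)+1 ∨ x = 2*(e:ℤ)+2) = {2*(e:ℤ)+1, 2*(e:ℤ)+2} := by
          ext x
          simp only [Finset.mem_filter, Finset.mem_insert, Finset.mem_singleton]
          constructor
          · rintro ⟨_, h⟩; exact h
          · rintro (h | h) <;> subst h <;> simp [hmem, hmem2]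
        rw [this]
        rw [Finset.card_insert_of_notMem (by simp only [Finset.mem_singleton]; omega), Finset.card_singleton]
        exact even_two
      · have hmem2 : (2*(e:ℤ)+2) ∉ A := fun h => hmem ((hp e hek).2 h)
        have : A.filter (fun x => x = 2*(e:ℤ)+1 ∨ x = 2*(e:ℤ)+2) = ∅ := by
          rw [Finset.filter_eq_empty_iff]
          rintro x hx (h | h) <;> subst h
          · exact hmem hx
          · exact hmem2 hx
        simp [this]
    have := ih (by omega)
    exact Nat.even_add.2 (by tauto)


lemma orderEmb_index {A : Finset ℤ} {m : ℕ} (h : A.card = m) (j : Fin m) :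
    (A.filter (fun x => x < A.orderEmbOfFin h j)).card = j.1 := by
  set e := A.orderEmbOfFin h with he
  have himg : A.filter (fun x => x < e j) = (Finset.univ.filter (fun i : Fin m => i < j)).image e := by
    ext x
    simp only [Finset.mem_filter, Finset.mem_image, Finset.mem_univ, true_and]
    constructor
    · rintro ⟨hxA, hxlt⟩
      have : x ∈ Set.range e := by rw [he, Finset.range_orderEmbOfFin]; exact hxA
      obtain ⟨i, rfl⟩ := this
      exact ⟨i, e.strictMono.lt_iff_lt.1 hxlt, rfl⟩
    · rintro ⟨i, hij, rfl⟩
      exact ⟨by rw [he]; exact A.orderEmbOfFin_mem h i, e.strictMono hij⟩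
  rw [himg, Finset.card_image_of_injective _ e.injective]
  have : Finset.univ.filter (fun i : Fin m => i < j) = Finset.Iio j := by
    ext i; simp
  rw [this, Fin.card_Iio]

lemma orderEmb_parity {k m : ℕ} {A : Finset ℤ} (hA : A ⊆ Finset.Icc 1 (2*(k:ℤ)-1))
    (hp : pairClosed k A) (h : A.card = m) (j : Fin m) :
    (2:ℤ) ∣ A.orderEmbOfFin h j - (j.1 + 1) := by
  set a := A.orderEmbOfFin h j with ha
  have haA : a ∈ A := A.orderEmbOfFin_mem h j
  have haIcc := Finset.mem_Icc.1 (hA haA)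
  have hidx : (A.filter (fun x => x < a)).card = j.1 := orderEmb_index h j
  rcases Int.even_or_odd a with he | ho
  · -- a even, a = 2i+2
    obtain ⟨c, hc⟩ := he
    set i : ℕ := (c - 1).toNat with hi
    have hci : (i:ℤ) = c - 1 := by omega
    have hik : i + 1 < k := by omega
    have h1mem : (2*(i:ℤ)+1) ∈ A := (hp i hik).2 (by rw [show 2*(i:ℤ)+2 = a by omega]; exact haA)
    have hsplit : A.filter (fun x => x < a) = insert (2*(i:ℤ)+1) (A.filter (fun x => x ≤ 2*(i:ℤ))) := by
      ext x
      simp only [Finset.mem_filter, Finset.mem_insert]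
      constructor
      · rintro ⟨hx, hlt⟩
        by_cases hx1 : x = 2*(i:ℤ)+1
        · exact Or.inl hx1
        · exact Or.inr ⟨hx, by omega⟩
      · rintro (rfl | ⟨hx, hle⟩)
        · exact ⟨h1mem, by omega⟩
        · exact ⟨hx, by omega⟩
    obtain ⟨r, hr⟩ := evenBelow hA hp i (by omega)
    have hnot : (2*(i:ℤ)+1) ∉ A.filter (fun x => x ≤ 2*(i:ℤ)) := by
      simp only [Finset.mem_filter]
      rintro ⟨_, hle⟩; omega
    rw [hsplit, Finset.card_insert_of_notMem hnot] at hidx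
    omega
  · -- a odd, a = 2i+1
    obtain ⟨c, hc⟩ := ho
    set i : ℕ := c.toNat with hi
    have hci : (i:ℤ) = c := by omega
    have hsplit : A.filter (fun x => x < a) = A.filter (fun x => x ≤ 2*(i:ℤ)) := by
      ext x
      simp only [Finset.mem_filter]
      constructor
      · rintro ⟨hx, h1⟩; exact ⟨hx, by omega⟩
      · rintro ⟨hx, h1⟩; exact ⟨hx, by omega⟩
    obtain ⟨r, hr⟩ := evenBelow hA hp i (by omega)
    rw [hsplit] at hidx
    omega

lemma filter_le_card_mem {A : Finset ℤ} {v : ℤ} (hv : v ∈ A) :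
    (A.filter (fun x => x ≤ v)).card = (A.filter (fun x => x < v)).card + 1 := by
  have : A.filter (fun x => x ≤ v) = insert v (A.filter (fun x => x < v)) := by
    ext x
    simp only [Finset.mem_filter, Finset.mem_insert]
    constructor
    · rintro ⟨hx, hle⟩
      rcases eq_or_lt_of_le hle with rfl | hlt
      · exact Or.inl rfl
      · exact Or.inr ⟨hx, hlt⟩
    · rintro (rfl | ⟨hx, hlt⟩)
      · exact ⟨hv, le_refl _⟩
      · exact ⟨hx, le_of_lt hlt⟩
  rw [this, Finset.card_insert_of_notMem (by simp)]

lemma filter_le_eq_of_not_mem {A : Finset ℤ} {v w : ℤ} (hv : v ∉ A) (hw : w + 1 = v) :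
    A.filter (fun x => x ≤ v) = A.filter (fun x => x ≤ w) := by
  ext x
  simp only [Finset.mem_filter]
  constructor
  · rintro ⟨hx, hle⟩
    refine ⟨hx, ?_⟩
    rcases eq_or_lt_of_le hle with rfl | hlt
    · exact absurd hx hv
    · omega
  · rintro ⟨hx, hle⟩; exact ⟨hx, by omega⟩

lemma pair_forced {k p : ℕ} {N P : Finset ℤ} (hk : 1 ≤ k)
    (hdisj : Disjoint N P) (hunion : N ∪ P = Finset.Icc 1 (2*(k:ℤ)-1))
    (hNcard : N.card = p) (hpodd : p % 2 = 1)
    (hNpar : ∀ v ∈ N, (2:ℤ) ∣ v - ((N.filter (fun x => x < v)).card : ℤ) - 1)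
    (hPpar : ∀ v ∈ P, (2:ℤ) ∣ v - ((P.filter (fun x => x < v)).card : ℤ) - 1) :
    pairClosed k N ∧ (2*(k:ℤ)-1) ∈ N := by
  have hNsub : N ⊆ Finset.Icc 1 (2*(k:ℤ)-1) := hunion ▸ Finset.subset_union_left
  have hPsub : P ⊆ Finset.Icc 1 (2*(k:ℤ)-1) := hunion ▸ Finset.subset_union_right
  have hsum : ∀ v : ℤ, 1 ≤ v → v ≤ 2*(k:ℤ)-1 →
      ((N.filter (fun x => x ≤ v)).card : ℤ) + ((P.filter (fun x => x ≤ v)).card : ℤ) = v := by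
    intro v h1 h2
    have hU : N.filter (fun x => x ≤ v) ∪ P.filter (fun x => x ≤ v) = Finset.Icc 1 v := by
      rw [← Finset.filter_union, hunion]
      ext x
      simp only [Finset.mem_filter, Finset.mem_Icc]
      omega
    have hD : Disjoint (N.filter (fun x => x ≤ v)) (P.filter (fun x => x ≤ v)) :=
      hdisj.mono (Finset.filter_subset _ _) (Finset.filter_subset _ _)
    have := Finset.card_union_of_disjoint hD
    rw [hU, Int.card_Icc] at this
    omega
  -- parity of the "other" counting function
  have hPevenAtN : ∀ v ∈ N, ((P.filter (fun x => x ≤ v)).card) % 2 = 0 := by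
    intro v hv
    have hIcc := Finset.mem_Icc.1 (hNsub hv)
    have h1 := hNpar v hv
    have h2 := filter_le_card_mem hv
    have h3 := hsum v hIcc.1 hIcc.2
    omega
  have hNevenAtP : ∀ v ∈ P, ((N.filter (fun x => x ≤ v)).card) % 2 = 0 := by
    intro v hv
    have hIcc := Finset.mem_Icc.1 (hPsub hv)
    have h1 := hPpar v hv
    have h2 := filter_le_card_mem hv
    have h3 := hsum v hIcc.1 hIcc.2
    omega
  constructor
  · intro i hik
    have hv1Icc : (2*(i:ℤ)+1) ∈ Finset.Icc 1 (2*(k:ℤ)-1) := by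
      simp only [Finset.mem_Icc]; omega
    have hv2Icc : (2*(i:ℤ)+2) ∈ Finset.Icc 1 (2*(k:ℤ)-1) := by
      simp only [Finset.mem_Icc]; omega
    have hv1 : (2*(i:ℤ)+1) ∈ N ∪ P := hunion ▸ hv1Icc
    have hv2 : (2*(i:ℤ)+2) ∈ N ∪ P := hunion ▸ hv2Icc
    rw [Finset.mem_union] at hv1 hv2
    constructor
    · intro h1N
      by_contra h2N
      have h2P : (2*(i:ℤ)+2) ∈ P := hv2.resolve_left h2N
      have e1 : N.filter (fun x => x ≤ 2*(i:ℤ)+2) = N.filter (fun x => x ≤ 2*(i:ℤ)+1) :=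
        filter_le_eq_of_not_mem h2N (by ring)
      have e2 := hNevenAtP _ h2P
      rw [e1] at e2
      have e3 := hPevenAtN _ h1N
      have e4 := hsum (2*(i:ℤ)+1) (by omega) (by omega)
      omega
    · intro h2N
      by_contra h1N
      have h1P : (2*(i:ℤ)+1) ∈ P := hv1.resolve_left h1N
      have h1P' : (2*(i:ℤ)+2) ∉ P := fun h => (Finset.disjoint_right.1 hdisj h) h2N
      have e1 : P.filter (fun x => x ≤ 2*(i:ℤ)+2) = P.filter (fun x => x ≤ 2*(i:ℤ)+1) :=
        filter_le_eq_of_not_mem h1P' (by ring)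
      have e2 := hPevenAtN _ h2N
      rw [e1] at e2
      have e3 := hNevenAtP _ h1P
      have e4 := hsum (2*(i:ℤ)+1) (by omega) (by omega)
      omega
  · by_contra hne
    have hm : (2*(k:ℤ)-1) ∈ Finset.Icc 1 (2*(k:ℤ)-1) := by
      simp only [Finset.mem_Icc]; omega
    have : (2*(k:ℤ)-1) ∈ N ∪ P := hunion ▸ hm
    rw [Finset.mem_union] at this
    have hP : (2*(k:ℤ)-1) ∈ P := this.resolve_left hne
    have heven := hNevenAtP _ hP
    have : N.filter (fun x => x ≤ 2*(k:ℤ)-1) = N := by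
      apply Finset.filter_true_of_mem
      intro x hx
      exact (Finset.mem_Icc.1 (hNsub hx)).2
    rw [this, hNcard] at heven
    omega

def NS (k : ℕ) (S : Finset (Fin (k-1))) : Finset ℤ :=
  (S.image fun i : Fin (k-1) => 2*(i:ℤ)+1) ∪ (S.image fun i : Fin (k-1) => 2*(i:ℤ)+2) ∪ {2*(k:ℤ)-1}

noncomputable def PS (k : ℕ) (S : Finset (Fin (k-1))) : Finset ℤ :=
  Finset.Icc 1 (2*(k:ℤ)-1) \ NS k S

lemma mem_NS {k : ℕ} {S : Finset (Fin (k-1))} {v : ℤ} :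
    v ∈ NS k S ↔ (v = 2*(k:ℤ)-1 ∨ ∃ i : Fin (k-1), i ∈ S ∧ (v = 2*(i:ℤ)+1 ∨ v = 2*(i:ℤ)+2)) := by
  unfold NS
  simp only [Finset.mem_union, Finset.mem_image, Finset.mem_singleton]
  constructor
  · rintro ((⟨i, hi, rfl⟩ | ⟨i, hi, rfl⟩) | h)
    · exact Or.inr ⟨i, hi, Or.inl rfl⟩
    · exact Or.inr ⟨i, hi, Or.inr rfl⟩
    · exact Or.inl h
  · rintro (h | ⟨i, hi, (rfl | rfl)⟩)
    · exact Or.inr h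
    · exact Or.inl (Or.inl ⟨i, hi, rfl⟩)
    · exact Or.inl (Or.inr ⟨i, hi, rfl⟩)

lemma NS_sub {k : ℕ} (hk : 1 ≤ k) (S : Finset (Fin (k-1))) :
    NS k S ⊆ Finset.Icc 1 (2*(k:ℤ)-1) := by
  intro v hv
  rw [mem_NS] at hv
  simp only [Finset.mem_Icc]
  rcases hv with rfl | ⟨i, _, (rfl | rfl)⟩
  · omega
  · have := i.2; omega
  · have := i.2; omega

lemma NS_card {k : ℕ} (hk : 1 ≤ k) (S : Finset (Fin (k-1))) :
    (NS k S).card = 2 * S.card + 1 := by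
  unfold NS
  have hinj1 : Function.Injective (fun i : Fin (k-1) => 2*(i:ℤ)+1) := by
    intro i j hij; simp only at hij
    exact Fin.ext (by omega)
  have hinj2 : Function.Injective (fun i : Fin (k-1) => 2*(i:ℤ)+2) := by
    intro i j hij; simp only at hij
    exact Fin.ext (by omega)
  have hd1 : Disjoint (S.image fun i : Fin (k-1) => 2*(i:ℤ)+1) (S.image fun i : Fin (k-1) => 2*(i:ℤ)+2) := by
    rw [Finset.disjoint_left]
    rintro v hv1 hv2
    simp only [Finset.mem_image] at hv1 hv2
    obtain ⟨i, _, rfl⟩ := hv1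
    obtain ⟨j, _, hj⟩ := hv2
    omega
  have hd2 : Disjoint ((S.image fun i : Fin (k-1) => 2*(i:ℤ)+1) ∪ (S.image fun i : Fin (k-1) => 2*(i:ℤ)+2))
      ({2*(k:ℤ)-1} : Finset ℤ) := by
    rw [Finset.disjoint_right]
    rintro v hv1 hv2
    simp only [Finset.mem_singleton] at hv1
    subst hv1
    simp only [Finset.mem_union, Finset.mem_image] at hv2
    rcases hv2 with ⟨i, _, hi⟩ | ⟨i, _, hi⟩ <;> (have := i.2; omega)
  rw [Finset.card_union_of_disjoint hd2, Finset.card_union_of_disjoint hd1,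
    Finset.card_image_of_injective _ hinj1, Finset.card_image_of_injective _ hinj2,
    Finset.card_singleton]
  omega

lemma mem_NS_odd {k : ℕ} {S : Finset (Fin (k-1))} {i : ℕ} (hik : i + 1 < k) :
    ((2*(i:ℤ)+1) ∈ NS k S ↔ ∃ hi : i < k - 1, (⟨i, hi⟩ : Fin (k-1)) ∈ S) := by
  rw [mem_NS]
  constructor
  · rintro (h | ⟨i', hi', (h | h)⟩)
    · omega
    · have : (i' : ℕ) = i := by omega
      exact ⟨by omega, by rwa [show (⟨i, by omega⟩ : Fin (k-1)) = i' from Fin.ext (by simp [this])]⟩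
    · omega
  · rintro ⟨hi, hmem⟩
    exact Or.inr ⟨⟨i, hi⟩, hmem, Or.inl (by simp)⟩

lemma mem_NS_even {k : ℕ} {S : Finset (Fin (k-1))} {i : ℕ} (hik : i + 1 < k) :
    ((2*(i:ℤ)+2) ∈ NS k S ↔ ∃ hi : i < k - 1, (⟨i, hi⟩ : Fin (k-1)) ∈ S) := by
  rw [mem_NS]
  constructor
  · rintro (h | ⟨i', hi', (h | h)⟩)
    · omega
    · omega
    · have : (i' : ℕ) = i := by omega
      exact ⟨by omega, by rwa [show (⟨i, by omega⟩ : Fin (k-1)) = i' from Fin.ext (by simp [this])]⟩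
  · rintro ⟨hi, hmem⟩
    exact Or.inr ⟨⟨i, hi⟩, hmem, Or.inr (by simp)⟩

lemma NS_pairClosed {k : ℕ} (S : Finset (Fin (k-1))) : pairClosed k (NS k S) := by
  intro i hik
  rw [mem_NS_odd hik, mem_NS_even hik]

lemma NS_top_mem {k : ℕ} (S : Finset (Fin (k-1))) : (2*(k:ℤ)-1) ∈ NS k S := by
  rw [mem_NS]; exact Or.inl rfl

lemma PS_sub {k : ℕ} (S : Finset (Fin (k-1))) : PS k S ⊆ Finset.Icc 1 (2*(k:ℤ)-1) :=
  Finset.sdiff_subset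

lemma PS_card {k : ℕ} (hk : 1 ≤ k) (S : Finset (Fin (k-1))) :
    (PS k S).card = 2*k-1 - (2 * S.card + 1) := by
  unfold PS
  rw [Finset.card_sdiff_of_subset (NS_sub hk S), NS_card hk S, Int.card_Icc]
  congr 1
  omega

lemma PS_pairClosed {k : ℕ} (hk : 1 ≤ k) (S : Finset (Fin (k-1))) : pairClosed k (PS k S) := by
  intro i hik
  unfold PS
  simp only [Finset.mem_sdiff, Finset.mem_Icc]
  rw [mem_NS_odd hik, mem_NS_even hik]
  constructor
  · rintro ⟨h1, h2⟩; exact ⟨by omega, h2⟩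
  · rintro ⟨h1, h2⟩; exact ⟨by omega, h2⟩

lemma PS_union {k : ℕ} (hk : 1 ≤ k) (S : Finset (Fin (k-1))) :
    PS k S ∪ NS k S = Finset.Icc 1 (2*(k:ℤ)-1) :=
  Finset.sdiff_union_of_subset (NS_sub hk S)

lemma PS_disjoint {k : ℕ} (S : Finset (Fin (k-1))) : Disjoint (PS k S) (NS k S) :=
  Finset.sdiff_disjoint

lemma NS_card_p {k p : ℕ} (hk : 1 ≤ k) (hpo : p % 2 = 1)
    (S : Finset (Fin (k-1))) (hS : S.card = (p-1)/2) : (NS k S).card = p := by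
  rw [NS_card hk S, hS]; omega

lemma PS_card_q {k p q : ℕ} (hk : 1 ≤ k) (hpq : p + q = 2*k) (hpo : p % 2 = 1)
    (S : Finset (Fin (k-1))) (hS : S.card = (p-1)/2) : (PS k S).card = q - 1 := by
  rw [PS_card hk S, hS]; omega

noncomputable def ePS {k p q : ℕ} (hk : 1 ≤ k) (hpq : p + q = 2*k) (hpo : p % 2 = 1)
    (S : Finset (Fin (k-1))) (hS : S.card = (p-1)/2) : Fin (q-1) ↪o ℤ :=
  (PS k S).orderEmbOfFin (PS_card_q hk hpq hpo S hS)

noncomputable def eNS {k p : ℕ} (hk : 1 ≤ k) (hpo : p % 2 = 1)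
    (S : Finset (Fin (k-1))) (hS : S.card = (p-1)/2) : Fin p ↪o ℤ :=
  (NS k S).orderEmbOfFin (NS_card_p hk hpo S hS)

section EmbFacts
variable {k p q : ℕ} (hk : 1 ≤ k) (hpq : p + q = 2*k) (hpo : p % 2 = 1)
    (S : Finset (Fin (k-1))) (hS : S.card = (p-1)/2)

lemma ePS_mem (t : Fin (q-1)) : ePS hk hpq hpo S hS t ∈ PS k S :=
  Finset.orderEmbOfFin_mem _ _ t

lemma eNS_mem (j : Fin p) : eNS hk hpo S hS j ∈ NS k S :=
  Finset.orderEmbOfFin_mem _ _ j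

lemma ePS_lower (t : Fin (q-1)) : (t.1 : ℤ) + 1 ≤ ePS hk hpq hpo S hS t :=
  orderEmb_lower (PS_sub S) _ t

lemma eNS_lower (j : Fin p) : (j.1 : ℤ) + 1 ≤ eNS hk hpo S hS j :=
  orderEmb_lower (NS_sub hk S) _ j

lemma ePS_parity (t : Fin (q-1)) : (2:ℤ) ∣ ePS hk hpq hpo S hS t - (t.1 + 1) :=
  orderEmb_parity (PS_sub S) (PS_pairClosed hk S) _ t

lemma eNS_parity (j : Fin p) : (2:ℤ) ∣ eNS hk hpo S hS j - (j.1 + 1) :=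
  orderEmb_parity (NS_sub hk S) (NS_pairClosed S) _ j

lemma ePS_gap {t t' : Fin (q-1)} (h : t' ≤ t) :
    (t.1 : ℤ) - t'.1 ≤ ePS hk hpq hpo S hS t - ePS hk hpq hpo S hS t' :=
  strictMono_int_gap (ePS hk hpq hpo S hS).strictMono t' t h

lemma eNS_gap {j j' : Fin p} (h : j' ≤ j) :
    (j.1 : ℤ) - j'.1 ≤ eNS hk hpo S hS j - eNS hk hpo S hS j' :=
  strictMono_int_gap (eNS hk hpo S hS).strictMono j' j h

lemma ePS_surjOn {v : ℤ} (hv : v ∈ PS k S) : ∃ t, ePS hk hpq hpo S hS t = v := by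
  have h : v ∈ Set.range ⇑(ePS hk hpq hpo S hS) := by
    rw [ePS, Finset.range_orderEmbOfFin]; exact hv
  exact Set.mem_range.1 h

lemma eNS_surjOn {v : ℤ} (hv : v ∈ NS k S) : ∃ j, eNS hk hpo S hS j = v := by
  have h : v ∈ Set.range ⇑(eNS hk hpo S hS) := by
    rw [eNS, Finset.range_orderEmbOfFin]; exact hv
  exact Set.mem_range.1 h

end EmbFacts

noncomputable def mkZ (n k p q : ℕ) (hn : q - 1 + p = n) (hk : 1 ≤ k)
    (hpq : p + q = 2 * k) (hpo : p % 2 = 1)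
    (S : Finset (Fin (k-1))) (hS : S.card = (p-1)/2) : Fin n → ℤ := fun idx =>
  if h : idx.1 < q - 1 then
    ePS hk hpq hpo S hS ⟨q - 2 - idx.1, by omega⟩
  else
    -(eNS hk hpo S hS ⟨idx.1 - (q-1), by have := idx.2; omega⟩)

lemma mkZ_pos {n k p q : ℕ} (hn : q - 1 + p = n) (hk : 1 ≤ k)
    (hpq : p + q = 2 * k) (hpo : p % 2 = 1)
    (S : Finset (Fin (k-1))) (hS : S.card = (p-1)/2) (idx : Fin n) (h : idx.1 < q - 1) :
    mkZ n k p q hn hk hpq hpo S hS idx = ePS hk hpq hpo S hS ⟨q - 2 - idx.1, by omega⟩ := by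
  simp only [mkZ, dif_pos h]

lemma mkZ_neg {n k p q : ℕ} (hn : q - 1 + p = n) (hk : 1 ≤ k)
    (hpq : p + q = 2 * k) (hpo : p % 2 = 1)
    (S : Finset (Fin (k-1))) (hS : S.card = (p-1)/2) (idx : Fin n) (h : ¬ idx.1 < q - 1) :
    mkZ n k p q hn hk hpq hpo S hS idx =
      -(eNS hk hpo S hS ⟨idx.1 - (q-1), by have := idx.2; omega⟩) := by
  simp only [mkZ, dif_neg h]

set_option maxHeartbeats 2000000 in
noncomputable def mkSol (n k p q : ℕ) (hn : q - 1 + p = n) (hk : 1 ≤ k)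
    (hpq : p + q = 2 * k) (hpo : p % 2 = 1)
    (S : Finset (Fin (k-1))) (hS : S.card = (p-1)/2) : RhoSol n p q hn where
  z := mkZ n k p q hn hk hpq hpo S hS
  b := fun i => (ePS hk hpq hpo S hS ⟨q - 2 - i.1, by have := i.2; omega⟩ - ((q:ℤ) - 1 - i.1)) / 2
  a := fun m => (eNS hk hpo S hS ⟨p - 1 - m.1, by have := m.2; omega⟩ - ((p:ℤ) - m.1)) / 2
  z_anti := by
    intro x y hxy
    have hxy' : x.1 < y.1 := hxy
    by_cases hy : y.1 < q - 1
    · have hx : x.1 < q - 1 := by omega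
      rw [mkZ_pos hn hk hpq hpo S hS x hx, mkZ_pos hn hk hpq hpo S hS y hy]
      exact (ePS hk hpq hpo S hS).strictMono (Fin.mk_lt_mk.2 (by omega))
    · by_cases hx : x.1 < q - 1
      · rw [mkZ_pos hn hk hpq hpo S hS x hx, mkZ_neg hn hk hpq hpo S hS y hy]
        have h1 := ePS_lower hk hpq hpo S hS ⟨q - 2 - x.1, by omega⟩
        have h2 := eNS_lower hk hpo S hS ⟨y.1 - (q-1), by have := y.2; omega⟩
        simp only [Fin.val_mk] at h1 h2
        omega
      · rw [mkZ_neg hn hk hpq hpo S hS x hx, mkZ_neg hn hk hpq hpo S hS y hy]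
        have := (eNS hk hpo S hS).strictMono
          (show (⟨x.1 - (q-1), by have := x.2; omega⟩ : Fin p) <
            ⟨y.1 - (q-1), by have := y.2; omega⟩ from Fin.mk_lt_mk.2 (by omega))
        omega
  z_abs := by
    have hq1 : 1 ≤ q := by omega
    have hnk : (n:ℤ) = 2*(k:ℤ) - 1 := by
      have : n = 2*k - 1 := by omega
      omega
    ext v
    simp only [Finset.mem_image, Finset.mem_univ, true_and, Finset.mem_Icc]
    constructor
    · rintro ⟨idx, rfl⟩
      by_cases h : idx.1 < q - 1
      · rw [mkZ_pos hn hk hpq hpo S hS idx h]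
        have h1 := ePS_lower hk hpq hpo S hS ⟨q - 2 - idx.1, by omega⟩
        have h2 := Finset.mem_Icc.1 (PS_sub S (ePS_mem hk hpq hpo S hS ⟨q - 2 - idx.1, by omega⟩))
        rw [abs_of_nonneg (by omega)]
        omega
      · rw [mkZ_neg hn hk hpq hpo S hS idx h]
        have h1 := eNS_lower hk hpo S hS ⟨idx.1 - (q-1), by have := idx.2; omega⟩
        have h2 := Finset.mem_Icc.1 (NS_sub hk S (eNS_mem hk hpo S hS ⟨idx.1 - (q-1), by have := idx.2; omega⟩))
        rw [abs_neg, abs_of_nonneg (by omega)]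
        omega
    · rintro ⟨h1, h2⟩
      have hv : v ∈ PS k S ∪ NS k S := by
        rw [PS_union hk S]
        exact Finset.mem_Icc.2 ⟨h1, by omega⟩
      rw [Finset.mem_union] at hv
      rcases hv with hv | hv
      · obtain ⟨t, ht⟩ := ePS_surjOn hk hpq hpo S hS hv
        have ht2 := t.2
        refine ⟨⟨q - 2 - t.1, by omega⟩, ?_⟩
        rw [mkZ_pos hn hk hpq hpo S hS _ (by simp only [Fin.val_mk]; omega),
          abs_eq (by omega : (0:ℤ) ≤ v)]
        left
        rw [← ht]
        congr 1
        apply Fin.ext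
        simp only [Fin.val_mk]
        omega
      · obtain ⟨j, hj⟩ := eNS_surjOn hk hpo S hS hv
        have hj2 := j.2
        refine ⟨⟨q - 1 + j.1, by omega⟩, ?_⟩
        rw [mkZ_neg hn hk hpq hpo S hS _ (by simp only [Fin.val_mk]; omega),
          abs_neg, abs_eq (by omega : (0:ℤ) ≤ v)]
        left
        rw [← hj]
        congr 1
        apply Fin.ext
        simp only [Fin.val_mk]
        omega
  b_anti := by
    intro x y hxy
    have hxy' : x.1 ≤ y.1 := hxy
    have hx2 := x.2
    have hy2 := y.2
    have hgap := ePS_gap hk hpq hpo S hS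
      (show (⟨q - 2 - y.1, by omega⟩ : Fin (q-1)) ≤ ⟨q - 2 - x.1, by omega⟩ from
        Fin.mk_le_mk.2 (by omega))
    have hp1 := ePS_parity hk hpq hpo S hS ⟨q - 2 - x.1, by omega⟩
    have hp2 := ePS_parity hk hpq hpo S hS ⟨q - 2 - y.1, by omega⟩
    simp only [Fin.val_mk] at hgap hp1 hp2 ⊢
    omega
  a_anti := by
    intro x y hxy
    have hxy' : x.1 ≤ y.1 := hxy
    have hx2 := x.2
    have hy2 := y.2
    have hgap := eNS_gap hk hpo S hS
      (show (⟨p - 1 - y.1, by omega⟩ : Fin p) ≤ ⟨p - 1 - x.1, by omega⟩ from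
        Fin.mk_le_mk.2 (by omega))
    have hp1 := eNS_parity hk hpo S hS ⟨p - 1 - x.1, by omega⟩
    have hp2 := eNS_parity hk hpo S hS ⟨p - 1 - y.1, by omega⟩
    simp only [Fin.val_mk] at hgap hp1 hp2 ⊢
    omega
  b_nonneg := by
    intro i
    have hi2 := i.2
    have h1 := ePS_lower hk hpq hpo S hS ⟨q - 2 - i.1, by omega⟩
    simp only [Fin.val_mk] at h1 ⊢
    omega
  a_nonneg := by
    intro m
    have hm2 := m.2
    have h1 := eNS_lower hk hpo S hS ⟨p - 1 - m.1, by omega⟩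
    simp only [Fin.val_mk] at h1 ⊢
    omega
  hzb := by
    intro i
    have hi2 := i.2
    rw [mkZ_pos hn hk hpq hpo S hS _ (show ((⟨i.1, by omega⟩ : Fin n)).1 < q - 1 from i.2)]
    have hp1 := ePS_parity hk hpq hpo S hS ⟨q - 2 - i.1, by omega⟩
    simp only [Fin.val_mk] at hp1 ⊢
    omega
  hza := by
    intro j
    have hj2 := j.2
    rw [mkZ_neg hn hk hpq hpo S hS _ (by simp only [Fin.val_mk]; omega)]
    simp only [Fin.val_mk]
    have heq1 : ∀ pf, (⟨q - 1 + j.1 - (q - 1), pf⟩ : Fin p) = j :=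
      fun pf => Fin.ext (by simp only [Fin.val_mk]; omega)
    have heq2 : ∀ pf, (⟨p - 1 - (p - 1 - j.1), pf⟩ : Fin p) = j :=
      fun pf => Fin.ext (by simp only [Fin.val_mk]; omega)
    rw [heq1, heq2]
    have hp1 := eNS_parity hk hpo S hS j
    omega

def negIdx {n p q : ℕ} (hn : q - 1 + p = n) (j : Fin p) : Fin n :=
  ⟨q - 1 + j.1, by have := j.2; omega⟩

def posIdx {n p q : ℕ} (hn : q - 1 + p = n) (i : Fin (q-1)) : Fin n :=
  ⟨i.1, by have := i.2; omega⟩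

def revIdx {m : ℕ} (t : Fin m) : Fin m := ⟨m - 1 - t.1, by have := t.2; omega⟩

def aIdx {p : ℕ} (j : Fin p) : Fin p := ⟨p - 1 - j.1, by have := j.2; omega⟩

@[simp] lemma negIdx_val {n p q : ℕ} (hn : q - 1 + p = n) (j : Fin p) :
    (negIdx hn j).1 = q - 1 + j.1 := rfl
@[simp] lemma posIdx_val {n p q : ℕ} (hn : q - 1 + p = n) (i : Fin (q-1)) :
    (posIdx hn i).1 = i.1 := rfl
@[simp] lemma revIdx_val {m : ℕ} (t : Fin m) : (revIdx t).1 = m - 1 - t.1 := rfl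
@[simp] lemma aIdx_val {p : ℕ} (j : Fin p) : (aIdx j).1 = p - 1 - j.1 := rfl

lemma revIdx_invol {m : ℕ} (t : Fin m) : revIdx (revIdx t) = t := by
  apply Fin.ext; simp only [revIdx_val]; have := t.2; omega

lemma aIdx_invol {p : ℕ} (j : Fin p) : aIdx (aIdx j) = j := by
  apply Fin.ext; simp only [aIdx_val]; have := j.2; omega

lemma hza' {n p q : ℕ} {hn : q - 1 + p = n} (sol : RhoSol n p q hn) (j : Fin p) :
    sol.z (negIdx hn j) + 2 * sol.a (aIdx j) = -(j.1 : ℤ) - 1 := sol.hza j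

lemma hzb' {n p q : ℕ} {hn : q - 1 + p = n} (sol : RhoSol n p q hn) (i : Fin (q-1)) :
    sol.z (posIdx hn i) - 2 * sol.b i = (q : ℤ) - 1 - i.1 := sol.hzb i

lemma RhoSol.ext' {n p q : ℕ} {hn : q - 1 + p = n} {x y : RhoSol n p q hn}
    (hz : x.z = y.z) (hb : x.b = y.b) (ha : x.a = y.a) : x = y := by
  cases x; cases y; congr

def gFun {n p q : ℕ} (hn : q - 1 + p = n) (sol : RhoSol n p q hn) : Fin p → ℤ :=
  fun j => -(sol.z (negIdx hn j))

def fFun {n p q : ℕ} (hn : q - 1 + p = n) (sol : RhoSol n p q hn) : Fin (q-1) → ℤ :=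
  fun t => sol.z (posIdx hn (revIdx t))

lemma gFun_eq {n p q : ℕ} (hn : q - 1 + p = n) (sol : RhoSol n p q hn) (j : Fin p) :
    gFun hn sol j = (j.1 : ℤ) + 1 + 2 * sol.a (aIdx j) := by
  have := hza' sol j
  simp only [gFun]
  omega

lemma gFun_lower {n p q : ℕ} (hn : q - 1 + p = n) (sol : RhoSol n p q hn) (j : Fin p) :
    (j.1 : ℤ) + 1 ≤ gFun hn sol j := by
  have := gFun_eq hn sol j
  have := sol.a_nonneg (aIdx j)
  omega

lemma gFun_parity {n p q : ℕ} (hn : q - 1 + p = n) (sol : RhoSol n p q hn) (j : Fin p) :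
    (2:ℤ) ∣ gFun hn sol j - (j.1 + 1) :=
  ⟨sol.a (aIdx j), by have := gFun_eq hn sol j; omega⟩

lemma gFun_mono {n p q : ℕ} (hn : q - 1 + p = n) (sol : RhoSol n p q hn) :
    StrictMono (gFun hn sol) := by
  intro j j' h
  have hlt : negIdx hn j < negIdx hn j' := by
    rw [Fin.lt_def]
    simp only [negIdx_val]
    have := Fin.lt_def.1 h
    omega
  have := sol.z_anti hlt
  simp only [gFun]
  omega

lemma fFun_eq {n p q : ℕ} (hn : q - 1 + p = n) (sol : RhoSol n p q hn) (t : Fin (q-1)) :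
    fFun hn sol t = (t.1 : ℤ) + 1 + 2 * sol.b (revIdx t) := by
  have h := hzb' sol (revIdx t)
  have ht2 := t.2
  simp only [fFun, revIdx_val] at h ⊢
  have : ((q - 1 - 1 - t.1 : ℕ) : ℤ) = (q:ℤ) - 2 - t.1 := by omega
  omega

lemma fFun_lower {n p q : ℕ} (hn : q - 1 + p = n) (sol : RhoSol n p q hn) (t : Fin (q-1)) :
    (t.1 : ℤ) + 1 ≤ fFun hn sol t := by
  have := fFun_eq hn sol t
  have := sol.b_nonneg (revIdx t)
  omega

lemma fFun_parity {n p q : ℕ} (hn : q - 1 + p = n) (sol : RhoSol n p q hn) (t : Fin (q-1)) :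
    (2:ℤ) ∣ fFun hn sol t - (t.1 + 1) :=
  ⟨sol.b (revIdx t), by have := fFun_eq hn sol t; omega⟩

lemma fFun_mono {n p q : ℕ} (hn : q - 1 + p = n) (sol : RhoSol n p q hn) :
    StrictMono (fFun hn sol) := by
  intro t t' h
  have ht2 := t.2
  have hlt : posIdx hn (revIdx t') < posIdx hn (revIdx t) := by
    rw [Fin.lt_def]
    simp only [posIdx_val, revIdx_val]
    have := Fin.lt_def.1 h
    omega
  exact sol.z_anti hlt

lemma mkSol_z {n k p q : ℕ} (hn : q - 1 + p = n) (hk : 1 ≤ k)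
    (hpq : p + q = 2 * k) (hpo : p % 2 = 1)
    (S : Finset (Fin (k-1))) (hS : S.card = (p-1)/2) :
    (mkSol n k p q hn hk hpq hpo S hS).z = mkZ n k p q hn hk hpq hpo S hS := rfl

set_option maxHeartbeats 2000000 in
lemma mkSol_surj (n k p q : ℕ) (hn : q - 1 + p = n) (hk : 1 ≤ k)
    (hpq : p + q = 2 * k) (hpo : p % 2 = 1) (sol : RhoSol n p q hn) :
    ∃ (S : Finset (Fin (k-1))) (hS : S.card = (p-1)/2),
      mkSol n k p q hn hk hpq hpo S hS = sol := by
  classical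
  have hq1 : 1 ≤ q := by omega
  have hp1 : 1 ≤ p := by omega
  set N : Finset ℤ := Finset.image (gFun hn sol) Finset.univ with hNdef
  set P : Finset ℤ := Finset.image (fFun hn sol) Finset.univ with hPdef
  have hNcard : N.card = p := by
    rw [hNdef, Finset.card_image_of_injective _ (gFun_mono hn sol).injective,
      Finset.card_univ, Fintype.card_fin]
  have hPcard : P.card = q - 1 := by
    rw [hPdef, Finset.card_image_of_injective _ (fFun_mono hn sol).injective,
      Finset.card_univ, Fintype.card_fin]
  have himg : P ∪ N = Finset.Icc (1:ℤ) (n:ℤ) := by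
    rw [← sol.z_abs]
    ext v
    simp only [Finset.mem_union, hPdef, hNdef, Finset.mem_image, Finset.mem_univ, true_and]
    constructor
    · rintro (⟨t, rfl⟩ | ⟨j, rfl⟩)
      · refine ⟨posIdx hn (revIdx t), ?_⟩
        have h1 := fFun_lower hn sol t
        rw [show sol.z (posIdx hn (revIdx t)) = fFun hn sol t from rfl,
          abs_of_nonneg (by omega)]
      · refine ⟨negIdx hn j, ?_⟩
        have h1 := gFun_lower hn sol j
        rw [show sol.z (negIdx hn j) = -(gFun hn sol j) from by simp [gFun],
          abs_neg, abs_of_nonneg (by omega)]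
    · rintro ⟨idx, rfl⟩
      by_cases h : idx.1 < q - 1
      · left
        set t0 : Fin (q-1) := revIdx ⟨idx.1, h⟩ with ht0
        refine ⟨t0, ?_⟩
        have heq : posIdx hn (revIdx t0) = idx := by
          apply Fin.ext
          simp only [posIdx_val, ht0, revIdx_val]
          omega
        have hl := fFun_lower hn sol t0
        have hft : fFun hn sol t0 = sol.z idx := by
          rw [show fFun hn sol t0 = sol.z (posIdx hn (revIdx t0)) from rfl, heq]
        rw [hft] at hl
        rw [hft, abs_of_nonneg (by omega)]
      · right
        set j0 : Fin p := ⟨idx.1 - (q-1), by have := idx.2; omega⟩ with hj0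
        refine ⟨j0, ?_⟩
        have heq : negIdx hn j0 = idx := by
          apply Fin.ext
          simp only [negIdx_val, hj0]
          omega
        have hl := gFun_lower hn sol j0
        have hgt : gFun hn sol j0 = -(sol.z idx) := by
          rw [show gFun hn sol j0 = -(sol.z (negIdx hn j0)) from rfl, heq]
        rw [hgt] at hl
        rw [hgt, abs_of_nonpos (by omega)]
  have hcard_union : (P ∪ N).card = q - 1 + p := by
    rw [himg, Int.card_Icc]
    omega
  have hinter : (P ∩ N).card = 0 := by
    have := Finset.card_union_add_card_inter P N
    omega
  have hdisj : Disjoint P N := by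
    rw [Finset.disjoint_iff_inter_eq_empty]
    exact Finset.card_eq_zero.1 hinter
  have hgemb : gFun hn sol = ⇑(N.orderEmbOfFin hNcard) :=
    Finset.orderEmbOfFin_unique hNcard
      (fun j => by rw [hNdef]; exact Finset.mem_image_of_mem _ (Finset.mem_univ j))
      (gFun_mono hn sol)
  have hfemb : fFun hn sol = ⇑(P.orderEmbOfFin hPcard) :=
    Finset.orderEmbOfFin_unique hPcard
      (fun t => by rw [hPdef]; exact Finset.mem_image_of_mem _ (Finset.mem_univ t))
      (fFun_mono hn sol)
  have hNpar : ∀ v ∈ N, (2:ℤ) ∣ v - ((N.filter (fun x => x < v)).card : ℤ) - 1 := by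
    intro v hv
    rw [hNdef, Finset.mem_image] at hv
    obtain ⟨j, _, rfl⟩ := hv
    have hidx := orderEmb_index hNcard j
    rw [← hgemb] at hidx
    rw [hidx]
    have := gFun_parity hn sol j
    omega
  have hPpar : ∀ v ∈ P, (2:ℤ) ∣ v - ((P.filter (fun x => x < v)).card : ℤ) - 1 := by
    intro v hv
    rw [hPdef, Finset.mem_image] at hv
    obtain ⟨t, _, rfl⟩ := hv
    have hidx := orderEmb_index hPcard t
    rw [← hfemb] at hidx
    rw [hidx]
    have := fFun_parity hn sol t
    omega
  have hIccEq : Finset.Icc (1:ℤ) (n:ℤ) = Finset.Icc 1 (2*(k:ℤ)-1) := by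
    rw [show (n:ℤ) = 2*(k:ℤ)-1 from by omega]
  obtain ⟨hpc, htop⟩ := pair_forced hk hdisj.symm
    (by rw [Finset.union_comm, himg, hIccEq]) hNcard hpo hNpar hPpar
  set S : Finset (Fin (k-1)) :=
    Finset.univ.filter (fun i : Fin (k-1) => (2*((i:ℕ):ℤ)+1) ∈ N) with hSdef
  have hNS : NS k S = N := by
    ext v
    constructor
    · intro hv
      rw [mem_NS] at hv
      rcases hv with rfl | ⟨i, hi, (rfl | rfl)⟩
      · exact htop
      · exact (Finset.mem_filter.1 hi).2
      · exact (hpc i.1 (by have := i.2; omega)).1 (Finset.mem_filter.1 hi).2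
    · intro hv
      have hvIcc : v ∈ Finset.Icc (1:ℤ) (2*(k:ℤ)-1) := by
        rw [← hIccEq, ← himg]
        exact Finset.mem_union_right _ hv
      rw [Finset.mem_Icc] at hvIcc
      rw [mem_NS]
      rcases Int.even_or_odd v with ⟨c, hc⟩ | ⟨c, hc⟩
      · right
        have hik : (c-1).toNat + 1 < k := by omega
        have hoddmem : (2*(((c-1).toNat : ℕ):ℤ)+1) ∈ N := by
          apply (hpc (c-1).toNat hik).2
          rw [show (2*(((c-1).toNat : ℕ):ℤ)+2) = v from by omega]
          exact hv
        refine ⟨⟨(c-1).toNat, by omega⟩, Finset.mem_filter.2 ⟨Finset.mem_univ _, ?_⟩, Or.inr ?_⟩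
        · exact hoddmem
        · simp only [Fin.val_mk]
          omega
      · by_cases hck : c = (k:ℤ)-1
        · left; omega
        · right
          have hik : c.toNat + 1 < k := by omega
          refine ⟨⟨c.toNat, by omega⟩, Finset.mem_filter.2 ⟨Finset.mem_univ _, ?_⟩, Or.inl ?_⟩
          · show (2*((c.toNat : ℕ):ℤ)+1) ∈ N
            rw [show (2*((c.toNat : ℕ):ℤ)+1) = v from by omega]
            exact hv
          · simp only [Fin.val_mk]
            omega
  have hScard : S.card = (p-1)/2 := by
    have := NS_card hk S
    rw [hNS, hNcard] at this
    omega
  have hPS : PS k S = P := by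
    unfold PS
    rw [hNS]
    ext v
    simp only [Finset.mem_sdiff]
    constructor
    · rintro ⟨hIcc, hNv⟩
      have hv : v ∈ P ∪ N := by
        rw [himg, hIccEq]
        exact hIcc
      rw [Finset.mem_union] at hv
      tauto
    · intro hP
      refine ⟨?_, fun hNv => ?_⟩
      · rw [← hIccEq, ← himg]
        exact Finset.mem_union_left _ hP
      · exact (Finset.disjoint_left.1 hdisj hP) hNv
  have hfePS : fFun hn sol = ⇑(ePS hk hpq hpo S hScard) :=
    Finset.orderEmbOfFin_unique (PS_card_q hk hpq hpo S hScard)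
      (fun t => by rw [hPS, hPdef]; exact Finset.mem_image_of_mem _ (Finset.mem_univ t))
      (fFun_mono hn sol)
  have hgeNS : gFun hn sol = ⇑(eNS hk hpo S hScard) :=
    Finset.orderEmbOfFin_unique (NS_card_p hk hpo S hScard)
      (fun j => by rw [hNS, hNdef]; exact Finset.mem_image_of_mem _ (Finset.mem_univ j))
      (gFun_mono hn sol)
  have hzfun : (mkSol n k p q hn hk hpq hpo S hScard).z = sol.z := by
    funext idx
    rw [mkSol_z]
    by_cases h : idx.1 < q - 1
    · rw [mkZ_pos hn hk hpq hpo S hScard idx h, ← hfePS]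
      have key : ∀ t : Fin (q-1), t.1 = q - 2 - idx.1 → fFun hn sol t = sol.z idx := by
        intro t ht
        show sol.z (posIdx hn (revIdx t)) = sol.z idx
        congr 1
        apply Fin.ext
        simp only [posIdx_val, revIdx_val, ht]
        omega
      exact key _ rfl
    · rw [mkZ_neg hn hk hpq hpo S hScard idx h, ← hgeNS]
      have key : ∀ j : Fin p, j.1 = idx.1 - (q-1) → -(gFun hn sol j) = sol.z idx := by
        intro j hj
        show -(-(sol.z (negIdx hn j))) = sol.z idx
        rw [neg_neg]
        congr 1
        apply Fin.ext
        simp only [negIdx_val, hj]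
        have := idx.2
        omega
      exact key _ rfl
  refine ⟨S, hScard, RhoSol.ext' hzfun ?_ ?_⟩
  · funext i
    have e1 := hzb' (mkSol n k p q hn hk hpq hpo S hScard) i
    have e2 := hzb' sol i
    rw [hzfun] at e1
    omega
  · funext m
    have e1 := hza' (mkSol n k p q hn hk hpq hpo S hScard) (aIdx m)
    have e2 := hza' sol (aIdx m)
    rw [hzfun, aIdx_invol] at e1
    rw [aIdx_invol] at e2
    omega

lemma NS_eq_image {n k p q : ℕ} (hn : q - 1 + p = n) (hk : 1 ≤ k)
    (hpq : p + q = 2 * k) (hpo : p % 2 = 1)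
    (S : Finset (Fin (k-1))) (hS : S.card = (p-1)/2) :
    NS k S = Finset.image
      (fun j : Fin p => -(mkZ n k p q hn hk hpq hpo S hS (negIdx hn j))) Finset.univ := by
  have hq1 : 1 ≤ q := by omega
  ext v
  simp only [Finset.mem_image, Finset.mem_univ, true_and]
  constructor
  · intro hv
    obtain ⟨j, hj⟩ := eNS_surjOn hk hpo S hS hv
    refine ⟨j, ?_⟩
    rw [mkZ_neg hn hk hpq hpo S hS (negIdx hn j) (by simp only [negIdx_val]; omega),
      neg_neg, ← hj]
    congr 1
    apply Fin.ext
    simp only [Fin.val_mk, negIdx_val]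
    omega
  · rintro ⟨j, rfl⟩
    rw [mkZ_neg hn hk hpq hpo S hS (negIdx hn j) (by simp only [negIdx_val]; omega), neg_neg]
    exact eNS_mem hk hpo S hS _

lemma mkSol_inj (n k p q : ℕ) (hn : q - 1 + p = n) (hk : 1 ≤ k)
    (hpq : p + q = 2 * k) (hpo : p % 2 = 1)
    (S1 S2 : Finset (Fin (k-1))) (h1 : S1.card = (p-1)/2) (h2 : S2.card = (p-1)/2)
    (heq : mkSol n k p q hn hk hpq hpo S1 h1 = mkSol n k p q hn hk hpq hpo S2 h2) :
    S1 = S2 := by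
  have hz := congrArg RhoSol.z heq
  rw [mkSol_z, mkSol_z] at hz
  have hNSeq : NS k S1 = NS k S2 := by
    rw [NS_eq_image hn hk hpq hpo S1 h1, NS_eq_image hn hk hpq hpo S2 h2, hz]
  ext i
  have hik : i.1 + 1 < k := by have := i.2; omega
  constructor
  · intro hi
    have hm : (2*((i.1:ℕ):ℤ)+1) ∈ NS k S1 :=
      (mem_NS_odd hik).2 ⟨i.2, by rw [Fin.eta]; exact hi⟩
    rw [hNSeq] at hm
    obtain ⟨hi2, hmem⟩ := (mem_NS_odd hik).1 hm
    rwa [Fin.eta] at hmem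
  · intro hi
    have hm : (2*((i.1:ℕ):ℤ)+1) ∈ NS k S2 :=
      (mem_NS_odd hik).2 ⟨i.2, by rw [Fin.eta]; exact hi⟩
    rw [← hNSeq] at hm
    obtain ⟨hi2, hmem⟩ := (mem_NS_odd hik).1 hm
    rwa [Fin.eta] at hmem


/-- Theorem on `X'(p,q;1,0)` with `p, q` odd: the number of solutions equals
`C(k−1, (p−1)/2) = C(k−1, (q−1)/2)` (here `n = 2k−1`, `p + q = 2k`, `p, q` odd). -/
theorem stmt16 (n k p q : ℕ) (hk : 1 ≤ k) (hn : n = 2 * k - 1)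
    (hppos : 0 < p) (hqpos : 0 < q) (hpq : p + q = 2 * k)
    (hpo : p % 2 = 1) (hqo : q % 2 = 1) :
    Nat.card (RhoSol n p q (by omega)) = Nat.choose (k - 1) ((p - 1) / 2) ∧
      Nat.choose (k - 1) ((p - 1) / 2) = Nat.choose (k - 1) ((q - 1) / 2) := by
  have hn' : q - 1 + p = n := by omega
  have hsymm : Nat.choose (k-1) ((p-1)/2) = Nat.choose (k-1) ((q-1)/2) := by
    rw [← Nat.choose_symm (show (p-1)/2 ≤ k-1 by omega)]
    congr 1
    omega
  have main : Nat.card (RhoSol n p q hn') = Nat.choose (k - 1) ((p - 1) / 2) := by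
    have hbij : Function.Bijective
        (fun Sp : {S : Finset (Fin (k-1)) // S.card = (p-1)/2} =>
          mkSol n k p q hn' hk hpq hpo Sp.1 Sp.2) := by
      constructor
      · intro x y hxy
        exact Subtype.ext (mkSol_inj n k p q hn' hk hpq hpo x.1 y.1 x.2 y.2 hxy)
      · intro sol
        obtain ⟨S, hS, hEq⟩ := mkSol_surj n k p q hn' hk hpq hpo sol
        exact ⟨⟨S, hS⟩, hEq⟩
    rw [← Nat.card_eq_of_bijective _ hbij, Nat.card_eq_fintype_card, Fintype.card_subtype]
    rw [show (Finset.univ.filter (fun S : Finset (Fin (k-1)) => S.card = (p-1)/2))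
        = Finset.powersetCard ((p-1)/2) Finset.univ from by
      ext S
      simp [Finset.mem_powersetCard]]
    rw [Finset.card_powersetCard, Finset.card_univ, Fintype.card_fin]
  exact ⟨main, hsymm⟩
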